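/- Let c* : R^n → R be convex with directional derivatives (c*)'(p,·). If for every pair p ≤ p' with D = {i : p_i = p'_i}, the directional derivative functions satisfy (c*)'(p,·) ≤_{D,P} (c*)'(p',·) (i.e., for all λ ∈ R^n and d_1, d_2 supported on D, (c*)'(p, λ+d_1∧d_2) + (c*)'(p', λ+d_1∨d_2) ≤ (c*)'(p, λ+d_1) + (c*)'(p', λ+d_2)), then c* is submodular. -/

import Mathlib

open Filter Set

private lemma aux_hasDerivRight {n : ℕ} (f : (Fin n → ℝ) → ℝ)
    (f' : (Fin n → ℝ) → (Fin n → ℝ) → ℝ)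
    (hf' : ∀ p d : Fin n → ℝ,
      Tendsto (fun t : ℝ => (f (p + t • d) - f p) / t) (nhdsWithin 0 (Set.Ioi 0))
        (nhds (f' p d)))
    (p u : Fin n → ℝ) (t : ℝ) :
    HasDerivWithinAt (fun s : ℝ => f (p + s • u)) (f' (p + t • u) u) (Ici t) t := by
  rw [hasDerivWithinAt_iff_tendsto_slope, (show Ici t \ {t} = Ioi t by ext x; simp only [mem_diff, mem_Ici, mem_singleton_iff, mem_Ioi]; grind)]
  have h2 : Tendsto (fun s : ℝ => s - t) (nhdsWithin t (Set.Ioi t)) (nhdsWithin 0 (Set.Ioi 0)) := by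
    apply tendsto_nhdsWithin_of_tendsto_nhds_of_eventually_within
    · have : Tendsto (fun s : ℝ => s - t) (nhds t) (nhds (t - t)) :=
        tendsto_id.sub tendsto_const_nhds
      simpa using this.mono_left nhdsWithin_le_nhds
    · filter_upwards [self_mem_nhdsWithin] with s hs
      simpa [sub_pos] using hs
  have h3 := (hf' (p + t • u) u).comp h2
  refine h3.congr fun s => ?_
  rw [slope_def_field]
  have : p + t • u + (s - t) • u = p + s • u := by rw [sub_smul]; abel
  simp only [Function.comp_apply, this]

/-- If the one-sided directional derivatives of a convex function `f` satisfy the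
`(D,P)`-order condition along comparable pairs, then `f` is submodular. -/
theorem submodular_of_dirDeriv_ple {n : ℕ} (f : (Fin n → ℝ) → ℝ)
    (hconv : ConvexOn ℝ Set.univ f)
    (f' : (Fin n → ℝ) → (Fin n → ℝ) → ℝ)
    (hf' : ∀ p d : Fin n → ℝ,
      Tendsto (fun t : ℝ => (f (p + t • d) - f p) / t) (nhdsWithin 0 (Set.Ioi 0))
        (nhds (f' p d)))
    (h : ∀ p p' : Fin n → ℝ, p ≤ p' →
      ∀ l d₁ d₂ : Fin n → ℝ,
        (∀ i, p i ≠ p' i → d₁ i = 0) → (∀ i, p i ≠ p' i → d₂ i = 0) →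
        f' p (l + d₁ ⊓ d₂) + f' p' (l + d₁ ⊔ d₂) ≤ f' p (l + d₁) + f' p' (l + d₂)) :
    ∀ a b : Fin n → ℝ, f (a ⊔ b) + f (a ⊓ b) ≤ f a + f b := by
  intro a b
  set m : Fin n → ℝ := a ⊓ b with hm
  set u : Fin n → ℝ := a - m with hudef
  set v : Fin n → ℝ := b - m with hvdef
  have hu : (0 : Fin n → ℝ) ≤ u := sub_nonneg.2 inf_le_left
  have hv : (0 : Fin n → ℝ) ≤ v := sub_nonneg.2 inf_le_right
  have ha : a = m + u := by rw [hudef]; abel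
  have hb : b = m + v := by rw [hvdef]; abel
  have hsup : a ⊔ b = m + v + u := by
    funext i
    rcases le_total (a i) (b i) with hi | hi
    · have h1 : (a ⊔ b) i = b i := by
        simp [Pi.sup_apply, sup_eq_right.2 hi]
      have h2 : m i = a i := by simp [hm, Pi.inf_apply, inf_eq_left.2 hi]
      simp [h1, hudef, hvdef, Pi.add_apply, Pi.sub_apply, h2]
    · have h1 : (a ⊔ b) i = a i := by
        simp [Pi.sup_apply, sup_eq_left.2 hi]
      have h2 : m i = b i := by simp [hm, Pi.inf_apply, inf_eq_right.2 hi]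
      simp [h1, hudef, hvdef, Pi.add_apply, Pi.sub_apply, h2]
  have hdisj : ∀ i, u i ≠ 0 → v i = 0 := by
    intro i hui
    rcases le_total (a i) (b i) with hi | hi
    · exact absurd (by simp [hudef, hm, Pi.sub_apply, Pi.inf_apply, inf_eq_left.2 hi]) hui
    · simp [hvdef, hm, Pi.sub_apply, Pi.inf_apply, inf_eq_right.2 hi]
  -- f' at 0 direction is 0
  have fz : ∀ q : Fin n → ℝ, f' q 0 = 0 := by
    intro q
    refine tendsto_nhds_unique (hf' q 0) ?_
    have : (fun t : ℝ => (f (q + t • (0 : Fin n → ℝ)) - f q) / t) = fun _ => (0 : ℝ) := by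
      funext t; simp
    rw [this]
    exact tendsto_const_nhds
  -- the key derivative comparison
  have key : ∀ t : ℝ, f' ((m + v) + t • u) u ≤ f' (m + t • u) u := by
    intro t
    have hle : m + t • u ≤ (m + v) + t • u := by
      intro i
      simp only [Pi.add_apply]
      have := hv i
      simp only [Pi.zero_apply] at this
      linarith
    have hsupp : ∀ i, (m + t • u) i ≠ ((m + v) + t • u) i → u i = 0 := by
      intro i hi
      by_contra hui
      apply hi
      simp [Pi.add_apply, hdisj i hui]
    have := h (m + t • u) ((m + v) + t • u) hle 0 u 0 hsupp (fun _ _ => by rfl)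
    have hinf : u ⊓ (0 : Fin n → ℝ) = 0 := inf_eq_right.2 hu
    have hsup0 : u ⊔ (0 : Fin n → ℝ) = u := sup_eq_left.2 hu
    simp only [hinf, hsup0, zero_add, add_zero, fz] at this
    linarith
  -- continuity of f
  have contf : Continuous f := by
    rw [← continuousOn_univ]
    exact hconv.continuousOn isOpen_univ
  -- set up G
  set G : ℝ → ℝ := fun t => f ((m + v) + t • u) - f (m + t • u) with hG
  have hGcont : ContinuousOn G (Icc (0:ℝ) 1) :=
    (((contf.comp (continuous_const.add ((continuous_id.smul continuous_const) :
        Continuous fun t : ℝ => t • u)))).sub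
      (contf.comp (continuous_const.add ((continuous_id.smul continuous_const) :
        Continuous fun t : ℝ => t • u)))).continuousOn
  have hGderiv : ∀ t ∈ Ico (0:ℝ) 1,
      HasDerivWithinAt G (f' ((m + v) + t • u) u - f' (m + t • u) u) (Ici t) t := by
    intro t _
    exact (aux_hasDerivRight f f' hf' (m + v) u t).sub (aux_hasDerivRight f f' hf' m u t)
  have hmain : G 1 ≤ G 0 := by
    have := image_le_of_deriv_right_le_deriv_boundary (B := fun _ => G 0) (B' := fun _ => (0:ℝ))
      hGcont hGderiv le_rfl continuousOn_const
      (fun x _ => hasDerivWithinAt_const x _ _)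
      (fun x _ => by simpa using sub_nonpos.2 (key x))
    exact this (right_mem_Icc.2 zero_le_one)
  have e1 : (m + v) + (1:ℝ) • u = a ⊔ b := by rw [hsup]; simp
  have e0 : (m + v) + (0:ℝ) • u = b := by rw [hb]; simp
  have e2 : m + (1:ℝ) • u = a := by rw [ha]; simp
  have e3 : m + (0:ℝ) • u = m := by simp
  simp only [hG, e1, e0, e2, e3] at hmain
  linarith
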